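/- Let a ∈ ℝ^n be nonnegative and b' the shift of a by t units (b'_i = a_{i−t} for i > t, b'_i = 0 for i ≤ t), and suppose a_{n−t+1} = ... = a_n = 0 so no mass is lost. Then the global OTW distance with any m satisfies OTW_m(a, b') ≤ t·(∑_{i=1}^n a_i). -/

import Mathlib

open Finset

noncomputable section

/-- Cumulative sum `A(i) = ∑_{j=1}^i a j`. -/
def cumsum (a : ℕ → ℝ) (i : ℕ) : ℝ := ∑ j ∈ Finset.Icc 1 i, a j

/-- Windowed cumulative sum `A_s(i) = ∑_{j=1}^i a j − ∑_{j=1}^{i−s} a j`. -/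
def wcumsum (a : ℕ → ℝ) (s i : ℕ) : ℝ := cumsum a i - cumsum a (i - s)

/-- Transport cost `⟨T, D⟩` with `D_{ij} = |i − j|`, indices in `[1, n]`. -/
def otCost (n : ℕ) (T : ℕ → ℕ → ℝ) : ℝ :=
  ∑ i ∈ Finset.Icc 1 n, ∑ j ∈ Finset.Icc 1 n, T i j * |(i : ℝ) - (j : ℝ)|

/-- Feasible (balanced) transport plan: nonnegative, row sums `a`, column sums `b`. -/
def IsPlan (n : ℕ) (a b : ℕ → ℝ) (T : ℕ → ℕ → ℝ) : Prop :=
  (∀ i ∈ Finset.Icc 1 n, ∀ j ∈ Finset.Icc 1 n, 0 ≤ T i j) ∧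
  (∀ i ∈ Finset.Icc 1 n, ∑ j ∈ Finset.Icc 1 n, T i j = a i) ∧
  (∀ j ∈ Finset.Icc 1 n, ∑ i ∈ Finset.Icc 1 n, T i j = b j)

/-- Balanced optimal transport distance with cost `|i − j|`. -/
def W (n : ℕ) (a b : ℕ → ℝ) : ℝ :=
  sInf {c | ∃ T, IsPlan n a b T ∧ c = otCost n T}

/-- Extended cost matrix `D(m)`: `|i−j|` on `[1,n]×[1,n]`, `m` to/from the sink `n+1`,
`0` between sinks. -/
def Dm (n : ℕ) (m : ℝ) (i j : ℕ) : ℝ :=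
  if i = n + 1 then (if j = n + 1 then 0 else m)
  else if j = n + 1 then m else |(i : ℝ) - (j : ℝ)|

/-- Extended sequence: append `mass` at the sink index `n+1`. -/
def extSeq (n : ℕ) (a : ℕ → ℝ) (mass : ℝ) (i : ℕ) : ℝ :=
  if i = n + 1 then mass else a i

/-- Unbalanced transport cost `⟨T, D(m)⟩`, indices in `[1, n+1]`. -/
def uCost (n : ℕ) (m : ℝ) (T : ℕ → ℕ → ℝ) : ℝ :=
  ∑ i ∈ Finset.Icc 1 (n+1), ∑ j ∈ Finset.Icc 1 (n+1), T i j * Dm n m i j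

/-- Feasible unbalanced plan: nonnegative, row sums `â = (a, ∑ b)`, column sums
`b̂ = (b, ∑ a)`. -/
def IsUPlan (n : ℕ) (a b : ℕ → ℝ) (T : ℕ → ℕ → ℝ) : Prop :=
  (∀ i ∈ Finset.Icc 1 (n+1), ∀ j ∈ Finset.Icc 1 (n+1), 0 ≤ T i j) ∧
  (∀ i ∈ Finset.Icc 1 (n+1), ∑ j ∈ Finset.Icc 1 (n+1), T i j = extSeq n a (cumsum b n) i) ∧
  (∀ j ∈ Finset.Icc 1 (n+1), ∑ i ∈ Finset.Icc 1 (n+1), T i j = extSeq n b (cumsum a n) j)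

/-- Unbalanced optimal transport distance `Ŵ_m(a, b)`. -/
def uW (n : ℕ) (m : ℝ) (a b : ℕ → ℝ) : ℝ :=
  sInf {c | ∃ T, IsUPlan n a b T ∧ c = uCost n m T}

/-- Global OTW distance `OTW_m(a,b) = m|A(n) − B(n)| + ∑_{i=1}^{n−1} |A(i) − B(i)|`. -/
def otwGlobal (n : ℕ) (m : ℝ) (a b : ℕ → ℝ) : ℝ :=
  m * |cumsum a n - cumsum b n| +
    ∑ i ∈ Finset.Icc 1 (n-1), |cumsum a i - cumsum b i|

/-- Local OTW distance with window `s`: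
`OTW_{m,s}(a,b) = m|A_s(n) − B_s(n)| + ∑_{i=1}^{n−1} |A_s(i) − B_s(i)|`. -/
def otwLocal (n : ℕ) (m : ℝ) (s : ℕ) (a b : ℕ → ℝ) : ℝ :=
  m * |wcumsum a s n - wcumsum b s n| +
    ∑ i ∈ Finset.Icc 1 (n-1), |wcumsum a s i - wcumsum b s i|

/-- Smooth ℓ1-loss `L_β`. -/
def smoothL1 (β x : ℝ) : ℝ := if |x| < β then x^2 / (2*β) else |x| - β/2

/-- Smoothed OTW distance `OTW^β_{m,s}`. -/
def otwSmooth (n : ℕ) (m : ℝ) (s : ℕ) (β : ℝ) (a b : ℕ → ℝ) : ℝ :=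
  m * smoothL1 β (wcumsum a s n - wcumsum b s n) +
    ∑ i ∈ Finset.Icc 1 (n-1), smoothL1 β (wcumsum a s i - wcumsum b s i)

/-- global OTW between a zero-padded sequence and its shift by `t`
is at most `t` times the total mass. -/
theorem otwGlobal_shift_le (n t : ℕ) (ht : t ≤ n) (m : ℝ) (a b' : ℕ → ℝ)
    (ha : ∀ i ∈ Finset.Icc 1 n, 0 ≤ a i)
    (haz : ∀ i ∈ Finset.Icc (n - t + 1) n, a i = 0)
    (hb'1 : ∀ i ∈ Finset.Icc (t + 1) n, b' i = a (i - t))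
    (hb'2 : ∀ i ∈ Finset.Icc 1 t, b' i = 0) :
    otwGlobal n m a b' ≤ (t : ℝ) * cumsum a n := by
  have hcum : ∀ (c : ℕ → ℝ) (i : ℕ), cumsum c i = ∑ j ∈ Finset.Ioc 0 i, c j := by
    intro c i
    rw [cumsum, ← Finset.Icc_add_one_left_eq_Ioc, zero_add]
  have hb : ∀ i ≤ n, cumsum b' i = cumsum a (i - t) := by
    intro i hi
    induction i with
    | zero => simp [cumsum]
    | succ k ih =>
      have hk : k ≤ n := Nat.le_of_succ_le hi
      have h1 : cumsum b' (k+1) = cumsum b' k + b' (k+1) := by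
        rw [cumsum, cumsum, Finset.sum_Icc_succ_top (Nat.le_add_left 1 k)]
      rw [h1, ih hk]
      by_cases hkt : k + 1 ≤ t
      · rw [hb'2 (k+1) (Finset.mem_Icc.mpr ⟨Nat.le_add_left 1 k, hkt⟩)]
        have e1 : k + 1 - t = 0 := Nat.sub_eq_zero_of_le hkt
        have e2 : k - t = 0 := Nat.sub_eq_zero_of_le (Nat.le_of_succ_le hkt)
        simp [e1, e2]
      · push_neg at hkt
        rw [hb'1 (k+1) (Finset.mem_Icc.mpr ⟨hkt, hi⟩)]
        have e2 : k + 1 - t = (k - t) + 1 := by omega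
        rw [e2, cumsum, cumsum, Finset.sum_Icc_succ_top (Nat.le_add_left 1 (k-t))]
  have hdiff : ∀ i ≤ n, cumsum a i - cumsum b' i = ∑ j ∈ Finset.Ioc (i - t) i, a j := by
    intro i hi
    rw [hb i hi, hcum, hcum, sub_eq_iff_eq_add, add_comm]
    exact (Finset.sum_Ioc_consecutive a (Nat.zero_le (i - t)) (Nat.sub_le i t)).symm
  have hn0 : cumsum a n - cumsum b' n = 0 := by
    rw [hdiff n le_rfl]
    apply Finset.sum_eq_zero
    intro j hj
    rw [Finset.mem_Ioc] at hj
    exact haz j (Finset.mem_Icc.mpr ⟨by omega, hj.2⟩)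
  rw [otwGlobal, hn0, abs_zero, mul_zero, zero_add]
  have habs : ∀ i ∈ Finset.Icc 1 (n-1),
      |cumsum a i - cumsum b' i| = ∑ j ∈ Finset.Ioc (i - t) i, a j := by
    intro i hi
    rw [Finset.mem_Icc] at hi
    rw [hdiff i (by omega)]
    apply abs_of_nonneg
    apply Finset.sum_nonneg
    intro j hj
    rw [Finset.mem_Ioc] at hj
    exact ha j (Finset.mem_Icc.mpr ⟨by omega, by omega⟩)
  rw [Finset.sum_congr rfl habs]
  have hsubmem : ∀ i ∈ Finset.Icc 1 (n-1),
      ∑ j ∈ Finset.Ioc (i - t) i, a j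
        = ∑ j ∈ Finset.Icc 1 n, if j ∈ Finset.Ioc (i - t) i then a j else 0 := by
    intro i hi
    rw [Finset.mem_Icc] at hi
    rw [Finset.sum_ite_mem, Finset.inter_eq_right.mpr]
    intro j hj
    rw [Finset.mem_Ioc] at hj
    exact Finset.mem_Icc.mpr ⟨by omega, by omega⟩
  rw [Finset.sum_congr rfl hsubmem, Finset.sum_comm]
  have hbound : ∀ j ∈ Finset.Icc 1 n,
      (∑ i ∈ Finset.Icc 1 (n-1), if j ∈ Finset.Ioc (i - t) i then a j else 0)
        ≤ (t : ℝ) * a j := by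
    intro j hj
    rw [Finset.mem_Icc] at hj
    rw [← Finset.sum_filter, Finset.sum_const, nsmul_eq_mul]
    have hcard : ((Finset.Icc 1 (n-1)).filter
        (fun i => j ∈ Finset.Ioc (i - t) i)).card ≤ t := by
      calc ((Finset.Icc 1 (n-1)).filter (fun i => j ∈ Finset.Ioc (i - t) i)).card
          ≤ (Finset.Icc j (j + t - 1)).card := by
            apply Finset.card_le_card
            intro i hmem
            rw [Finset.mem_filter, Finset.mem_Ioc] at hmem
            exact Finset.mem_Icc.mpr ⟨by omega, by omega⟩
        _ = j + t - 1 + 1 - j := Nat.card_Icc _ _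
        _ ≤ t := by omega
    exact mul_le_mul_of_nonneg_right (by exact_mod_cast hcard)
      (ha j (Finset.mem_Icc.mpr hj))
  calc (∑ j ∈ Finset.Icc 1 n, ∑ i ∈ Finset.Icc 1 (n-1),
        if j ∈ Finset.Ioc (i - t) i then a j else 0)
      ≤ ∑ j ∈ Finset.Icc 1 n, (t : ℝ) * a j := Finset.sum_le_sum hbound
    _ = (t : ℝ) * cumsum a n := by rw [← Finset.mul_sum, cumsum]

end
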